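/- Let X be a compact Hausdorff space and A a unital C*-algebra. The map sending a pair (x, τ_A) ∈ X × ∂ₑT(A) to the functional τ on C(X,A) defined by τ(f) = τ_A(f(x)) is a homeomorphism from X × ∂ₑT(A) onto ∂ₑT(C(X,A)), where trace spaces carry the weak-* topology. -/

import Mathlib

noncomputable section

set_option maxHeartbeats 1000000
set_option linter.unusedSectionVars false

open scoped ComplexOrder

/-- The set of tracial states of a unital C*-algebra, as a subset of the weak-* dual. -/
def TracialStates (A : Type*) [CStarAlgebra A] : Set (WeakDual ℂ A) :=
  {τ | τ 1 = 1 ∧ (∀ a : A, 0 ≤ τ (star a * a)) ∧ ∀ a b : A, τ (a * b) = τ (b * a)}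

namespace Stmt17

variable {B : Type*} [CStarAlgebra B]

lemma pos_im {τ : WeakDual ℂ B} (hpos : ∀ b : B, 0 ≤ τ (star b * b)) (b : B) :
    (τ (star b * b)).im = 0 := by
  have := (Complex.le_def.mp (hpos b)).2
  simpa using this.symm

lemma pos_re {τ : WeakDual ℂ B} (hpos : ∀ b : B, 0 ≤ τ (star b * b)) (b : B) :
    0 ≤ (τ (star b * b)).re := by
  have := (Complex.le_def.mp (hpos b)).1
  simpa using this

/-- Cauchy-Schwarz for positive functionals. -/
lemma cs {τ : WeakDual ℂ B} (hpos : ∀ b : B, 0 ≤ τ (star b * b)) (a b : B) :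
    ‖τ (star a * b)‖ ^ 2 ≤ (τ (star a * a)).re * (τ (star b * b)).re := by
  -- first, conjugate symmetry
  have hsymm : ∀ u v : B, τ (star v * u) = starRingEnd ℂ (τ (star u * v)) := by
    intro u v
    have h1 : (τ (star (u + v) * (u + v))).im = 0 := pos_im hpos _
    have h2 : (τ (star (u + Complex.I • v) * (u + Complex.I • v))).im = 0 := pos_im hpos _
    have e1 : star (u + v) * (u + v)
        = star u * u + (star u * v + (star v * u + star v * v)) := by
      rw [star_add]; noncomm_ring
    have e2 : star (u + Complex.I • v) * (u + Complex.I • v)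
        = star u * u + Complex.I • (star u * v) - Complex.I • (star v * u) + star v * v := by
      have st : star (u + Complex.I • v) = star u - Complex.I • star v := by
        rw [star_add, star_smul, Complex.star_def, Complex.conj_I, neg_smul,
          ← sub_eq_add_neg]
      rw [st]
      simp only [sub_mul, mul_add, smul_add, smul_mul_assoc, mul_smul_comm, smul_smul,
        Complex.I_mul_I, neg_one_smul]
      match_scalars <;> simp [Complex.I_sq]
    rw [e1] at h1; rw [e2] at h2
    simp only [map_add, map_sub, map_smul, Complex.add_im, Complex.sub_im, Complex.smul_im,
      smul_eq_mul, Complex.mul_im, Complex.I_re, Complex.I_im, Complex.neg_re,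
      Complex.neg_im] at h1 h2
    have ha := pos_im hpos u
    have hb := pos_im hpos v
    apply Complex.ext
    · simp only [Complex.conj_re]
      nlinarith [h2, ha, hb]
    · simp only [Complex.conj_im]
      nlinarith [h1, ha, hb]
  set c := τ (star a * b) with hc
  by_cases hc0 : c = 0
  · rw [hc0]; simpa using mul_nonneg (pos_re hpos a) (pos_re hpos b)
  set K := ‖c‖ ^ 2 with hK
  have key : ∀ t : ℝ, 0 ≤ (τ (star a * a)).re - 2 * t * K
      + t ^ 2 * K * (τ (star b * b)).re := by
    intro t
    set l : ℂ := -(t : ℂ) * starRingEnd ℂ c with hl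
    have expand : star (a + l • b) * (a + l • b)
        = star a * a + (l • (star a * b) +
            (starRingEnd ℂ l • (star b * a) + (starRingEnd ℂ l * l) • (star b * b))) := by
      rw [star_add, star_smul]
      simp only [Complex.star_def, smul_mul_assoc, mul_smul_comm, add_mul, mul_add, smul_smul]
      module
    have hp := (Complex.le_def.mp (hpos (a + l • b))).1
    rw [expand] at hp
    simp only [map_add, map_smul, Complex.zero_re] at hp
    have hba : τ (star b * a) = starRingEnd ℂ c := hsymm a b
    rw [hba, ← hc] at hp
    have him := pos_im hpos b
    have hcc : c * starRingEnd ℂ c = ((K : ℝ) : ℂ) := by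
      rw [Complex.mul_conj']; norm_cast
    have hconjl : starRingEnd ℂ l = -(t : ℂ) * c := by
      rw [hl]; simp [map_mul, Complex.conj_ofReal]
    have hA : l • c = ((-(t * K) : ℝ) : ℂ) := by
      rw [smul_eq_mul, hl]; push_cast; linear_combination (-(t : ℂ)) * hcc
    have hB : starRingEnd ℂ l • starRingEnd ℂ c = ((-(t * K) : ℝ) : ℂ) := by
      rw [smul_eq_mul, hconjl]; push_cast; linear_combination (-(t : ℂ)) * hcc
    have hC : starRingEnd ℂ l * l = ((t ^ 2 * K : ℝ) : ℂ) := by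
      rw [hconjl, hl]; push_cast; linear_combination ((t : ℂ) ^ 2) * hcc
    have hre : (l • c + (starRingEnd ℂ l • starRingEnd ℂ c
        + (starRingEnd ℂ l * l) • τ (star b * b))).re
        = -2 * t * K + t ^ 2 * K * (τ (star b * b)).re := by
      rw [hA, hB, hC]
      simp only [smul_eq_mul, Complex.add_re, Complex.ofReal_re, Complex.mul_re,
        Complex.ofReal_im, him]
      ring
    rw [Complex.add_re, hre] at hp
    linarith [hp]
  have hKpos : 0 < K := by
    rw [hK]
    have : ‖c‖ ≠ 0 := norm_ne_zero_iff.mpr hc0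
    positivity
  set A0 := (τ (star a * a)).re
  set B0 := (τ (star b * b)).re
  have hB0 : 0 ≤ B0 := pos_re hpos b
  rcases eq_or_lt_of_le hB0 with hB | hB
  · have h := key ((A0 + 1) / (2 * K))
    rw [← hB] at h
    have e : 2 * ((A0 + 1) / (2 * K)) * K = A0 + 1 := by field_simp
    nlinarith [h, e]
  · have h := key (1 / B0)
    have hB' : B0 ≠ 0 := ne_of_gt hB
    have e : A0 - 2 * (1 / B0) * K + (1 / B0) ^ 2 * K * B0 = A0 - K / B0 := by
      field_simp; ring
    rw [e] at h
    have : K / B0 ≤ A0 := by linarith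
    calc K = K / B0 * B0 := by field_simp
    _ ≤ A0 * B0 := by nlinarith

lemma tracial_pos_smul_re {τ : WeakDual ℂ B} (b : B)
    (hpos : ∀ a : B, 0 ≤ τ (star a * a)) :
    τ (star b * b) = (((τ (star b * b)).re : ℝ) : ℂ) :=
  Complex.ext rfl (by simpa using pos_im hpos b)

/-- A tracial state has norm at most one. -/
lemma tracial_norm_le {τ : WeakDual ℂ B} (hτ : τ ∈ TracialStates B) (a : B) :
    ‖τ a‖ ≤ ‖a‖ := by
  obtain ⟨h1, hpos, -⟩ := hτ
  have hre : (τ (star a * a)).re ≤ ‖a‖ ^ 2 := by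
    set b := star a * a with hb
    obtain ⟨c, hcsq⟩ : ∃ c : B, star c * c = algebraMap ℝ B ‖b‖ - b := by
      letI : PartialOrder B := CStarAlgebra.spectralOrder B
      letI : StarOrderedRing B := CStarAlgebra.spectralOrderedRing B
      have hbnn : (0 : B) ≤ b := star_mul_self_nonneg a
      have hba : b ≤ algebraMap ℝ B ‖b‖ :=
        (IsSelfAdjoint.of_nonneg hbnn).le_algebraMap_norm_self
      have hd : (0 : B) ≤ algebraMap ℝ B ‖b‖ - b := sub_nonneg.mpr hba
      exact ⟨CFC.sqrt (algebraMap ℝ B ‖b‖ - b),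
        by rw [(IsSelfAdjoint.of_nonneg (CFC.sqrt_nonneg _)).star_eq,
          CFC.sqrt_mul_sqrt_self _ hd]⟩
    have h0 := pos_re hpos c
    rw [hcsq] at h0
    have halg : τ (algebraMap ℝ B ‖b‖) = ((‖b‖ : ℝ) : ℂ) := by
      rw [Algebra.algebraMap_eq_smul_one, ← algebraMap_smul ℂ (‖b‖ : ℝ) (1 : B),
        map_smul, h1]
      simp [Algebra.algebraMap_eq_smul_one]
    rw [map_sub, halg] at h0
    simp only [Complex.sub_re, Complex.ofReal_re] at h0
    have : ‖b‖ ≤ ‖a‖ ^ 2 := by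
      rw [hb, CStarRing.norm_star_mul_self]; rw [sq]
    linarith
  have hcs : ‖τ a‖ ^ 2 ≤ (τ (star (1:B) * 1)).re * (τ (star a * a)).re := by
    have := cs hpos 1 a
    simpa using this
  have h11 : (τ (star (1:B) * 1)).re = 1 := by
    simp only [star_one, one_mul, h1, Complex.one_re]
  rw [h11, one_mul] at hcs
  nlinarith [norm_nonneg (τ a), norm_nonneg a, hcs, hre]

section CXA

variable {X : Type*} [TopologicalSpace X] [CompactSpace X] [T2Space X]
variable {A : Type*} [CStarAlgebra A]

/-- Multiplication of an `A`-valued map by a real scalar function. -/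
def sm (g : C(X, ℝ)) (f : C(X, A)) : C(X, A) :=
  ⟨fun y => g y • f y, (map_continuous g).smul (map_continuous f)⟩

@[simp] lemma sm_apply (g : C(X, ℝ)) (f : C(X, A)) (y : X) : sm g f y = g y • f y := rfl

/-- Multiplication of an `A`-valued map by a complex scalar function. -/
def smC (g : C(X, ℂ)) (f : C(X, A)) : C(X, A) :=
  ⟨fun y => g y • f y, (map_continuous g).smul (map_continuous f)⟩

@[simp] lemma smC_apply (g : C(X, ℂ)) (f : C(X, A)) (y : X) : smC g f y = g y • f y := rfl

lemma sm_one_mul (g : C(X, ℝ)) (f : C(X, A)) : sm g 1 * f = sm g f := by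
  ext y; simp [smul_mul_assoc]

lemma mul_sm_one (g : C(X, ℝ)) (f : C(X, A)) : f * sm g 1 = sm g f := by
  ext y; simp [mul_smul_comm]

lemma star_real_smul (r : ℝ) (a : A) : star (r • a) = r • star a := by
  rw [← algebraMap_smul ℂ r a, ← algebraMap_smul ℂ r (star a), star_smul]
  simp [Complex.star_def, Complex.conj_ofReal]

lemma star_sm (g : C(X, ℝ)) (f : C(X, A)) : star (sm g f) = sm g (star f) := by
  ext y; simp [star_real_smul]

lemma sm_sm (g h : C(X, ℝ)) (f : C(X, A)) : sm g (sm h f) = sm (g * h) f := by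
  ext y; simp [smul_smul]

lemma sm_add (g h : C(X, ℝ)) (f : C(X, A)) : sm (g + h) f = sm g f + sm h f := by
  ext y; simp [add_smul]

lemma sm_sub (g h : C(X, ℝ)) (f : C(X, A)) : sm (g - h) f = sm g f - sm h f := by
  ext y; simp [sub_smul]

lemma sm_one_f (f : C(X, A)) : sm 1 f = f := by
  ext y; simp

lemma sm_mul_left (g : C(X, ℝ)) (u v : C(X, A)) : sm g (u * v) = sm g u * v := by
  ext y; simp [smul_mul_assoc]

lemma sm_mul_right (g : C(X, ℝ)) (u v : C(X, A)) : u * sm g v = sm g (u * v) := by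
  ext y; simp [mul_smul_comm]

/-- The pointwise square root of a nonnegative function. -/
def rsqrt (g : C(X, ℝ)) : C(X, ℝ) :=
  ⟨fun y => Real.sqrt (g y), Real.continuous_sqrt.comp (map_continuous g)⟩

lemma rsqrt_mul_self (g : C(X, ℝ)) (hg : ∀ y, 0 ≤ g y) : rsqrt g * rsqrt g = g := by
  ext y; exact Real.mul_self_sqrt (hg y)

lemma sm_star_mul_self (g : C(X, ℝ)) (hg : ∀ y, 0 ≤ g y) (f : C(X, A)) :
    star (sm (rsqrt g) 1) * sm (rsqrt g) f = sm g f := by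
  rw [star_sm, star_one, sm_one_mul, sm_sm, rsqrt_mul_self g hg]

lemma sm_pos {τ : WeakDual ℂ C(X, A)} (hpos : ∀ b : C(X, A), 0 ≤ τ (star b * b))
    (g : C(X, ℝ)) (hg : ∀ y, 0 ≤ g y) : 0 ≤ τ (sm g 1) := by
  rw [← sm_star_mul_self g hg 1]
  exact hpos _

lemma sm_zero {τ : WeakDual ℂ C(X, A)} (hpos : ∀ b : C(X, A), 0 ≤ τ (star b * b))
    (g : C(X, ℝ)) (hg : ∀ y, 0 ≤ g y) (hz : τ (sm g 1) = 0) (f : C(X, A)) :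
    τ (sm g f) = 0 := by
  have h1 := cs (B := C(X, A)) (τ := τ) hpos (sm (rsqrt g) 1) (sm (rsqrt g) f)
  rw [sm_star_mul_self g hg f] at h1
  have h2 : star (sm (rsqrt g) 1) * sm (rsqrt g) 1 = sm g 1 := sm_star_mul_self (A := A) g hg 1
  rw [h2, hz] at h1
  simp only [Complex.zero_re, zero_mul] at h1
  have := norm_nonneg (τ (sm g f))
  have hn : ‖τ (sm g f)‖ = 0 := by nlinarith
  exact norm_eq_zero.mp hn

lemma wd_smul_apply {B : Type*} [CStarAlgebra B] (r : ℝ) (σ : WeakDual ℂ B) (f : B) :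
    (r • σ) f = r • σ f := rfl

lemma sm_one_add_sm_one (g : C(X, ℝ)) :
    sm g 1 + sm (1 - g) 1 = (1 : C(X, A)) := by
  ext y; simp [sub_smul, add_smul]

lemma scaled_apply (τ : WeakDual ℂ C(X, A)) (g : C(X, ℝ)) (s : ℝ) (f : C(X, A)) :
    ((s • (ContinuousLinearMap.comp τ (ContinuousLinearMap.mul ℂ C(X, A) (sm g 1)))
      : WeakDual ℂ C(X, A))) f = s • τ (sm g f) := by
  have h : ((s • (ContinuousLinearMap.comp τ (ContinuousLinearMap.mul ℂ C(X, A) (sm g 1)))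
      : WeakDual ℂ C(X, A))) f = s • τ (sm g 1 * f) := rfl
  rw [h, sm_one_mul]

lemma sm_conj_pos (g : C(X, ℝ)) (hg : ∀ y, 0 ≤ g y) (a : C(X, A)) :
    sm g (star a * a) = star (sm (rsqrt g) a) * sm (rsqrt g) a := by
  rw [star_sm]
  ext y
  simp [rsqrt, smul_mul_assoc, mul_smul_comm, smul_smul, Real.mul_self_sqrt (hg y)]

lemma scaled_mem {τ : WeakDual ℂ C(X, A)} (hmem : τ ∈ TracialStates C(X, A))
    (g : C(X, ℝ)) (hg : ∀ y, 0 ≤ g y) {s : ℝ} (hs : 0 < s)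
    (hsval : τ (sm g 1) = ((s : ℝ) : ℂ)) :
    ((s⁻¹ : ℝ) • (ContinuousLinearMap.comp τ (ContinuousLinearMap.mul ℂ C(X, A) (sm g 1)))
      : WeakDual ℂ C(X, A)) ∈ TracialStates C(X, A) := by
  obtain ⟨h1, hpos, htr⟩ := hmem
  refine ⟨?_, ?_, ?_⟩
  · erw [scaled_apply]; rw [hsval, Complex.real_smul]
    push_cast
    field_simp
  · intro a
    erw [scaled_apply]; rw [sm_conj_pos g hg a, Complex.real_smul]
    refine mul_nonneg ?_ (hpos _)
    rw [Complex.zero_le_real]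
    positivity
  · intro a b
    erw [scaled_apply, scaled_apply]
    congr 1
    rw [sm_mul_left, htr, sm_mul_right]

/-- Central multiplicativity of extreme tracial states, on `[0,1]`-valued functions. -/
lemma mult01 {τ : WeakDual ℂ C(X, A)}
    (hτ : τ ∈ Set.extremePoints ℝ (TracialStates C(X, A)))
    (g : C(X, ℝ)) (hg0 : ∀ y, 0 ≤ g y) (hg1 : ∀ y, g y ≤ 1) (f : C(X, A)) :
    τ (sm g f) = τ (sm g 1) * τ f := by
  obtain ⟨hmem, hext⟩ := mem_extremePoints.mp hτ
  obtain ⟨h1, hpos, htr⟩ := id hmem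
  have hg0' : ∀ y, 0 ≤ (1 - g) y := fun y => by simp [hg1 y]
  set t : ℝ := (τ (sm g 1)).re with ht
  have htval : τ (sm g 1) = ((t : ℝ) : ℂ) := by
    have h := tracial_pos_smul_re (sm (rsqrt g) 1) hpos
    rw [sm_star_mul_self g hg0 1] at h
    exact h
  have ht0 : 0 ≤ t := by
    have := sm_pos hpos g hg0
    exact (Complex.le_def.mp this).1
  have hsum : τ (sm g 1) + τ (sm (1 - g) 1) = 1 := by
    rw [← map_add, sm_one_add_sm_one g, h1]
  have htval' : τ (sm (1 - g) 1) = (((1 - t) : ℝ) : ℂ) := by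
    have h := tracial_pos_smul_re (sm (rsqrt (1 - g)) 1) hpos
    rw [sm_star_mul_self (1 - g) hg0' 1] at h
    have hre : (τ (sm (1 - g) 1)).re = 1 - t := by
      have h2 := congrArg Complex.re hsum
      simp only [Complex.add_re, Complex.one_re, htval, Complex.ofReal_re] at h2
      linarith
    rw [h, hre]
  have ht1 : t ≤ 1 := by
    have h := sm_pos hpos (1 - g) hg0'
    have h2 := (Complex.le_def.mp h).1
    rw [htval'] at h2
    simp only [Complex.ofReal_re, Complex.zero_re] at h2
    linarith
  rcases eq_or_lt_of_le ht0 with h0 | h0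
  · have hzz : τ (sm g 1) = 0 := by rw [htval, ← h0]; simp
    have hv : τ (sm g f) = 0 := sm_zero hpos g hg0 hzz f
    rw [hv, hzz, zero_mul]
  rcases eq_or_lt_of_le ht1 with h1' | h1'
  · have hz : τ (sm (1 - g) 1) = 0 := by rw [htval', h1']; simp
    have hv : τ (sm (1 - g) f) = 0 := sm_zero hpos (1 - g) hg0' hz f
    rw [sm_sub, sm_one_f, map_sub, sub_eq_zero] at hv
    rw [htval, h1', ← hv]
    simp
  · set σ₁ : WeakDual ℂ C(X, A) :=
      (t⁻¹ : ℝ) • (ContinuousLinearMap.comp τ (ContinuousLinearMap.mul ℂ C(X, A) (sm g 1)))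
      with hσ1
    set σ₂ : WeakDual ℂ C(X, A) :=
      ((1 - t)⁻¹ : ℝ) •
        (ContinuousLinearMap.comp τ (ContinuousLinearMap.mul ℂ C(X, A) (sm (1 - g) 1)))
      with hσ2
    have hm1 : σ₁ ∈ TracialStates C(X, A) := scaled_mem hmem g hg0 h0 htval
    have hm2 : σ₂ ∈ TracialStates C(X, A) :=
      scaled_mem hmem (1 - g) hg0' (by linarith) htval'
    have hseg : τ ∈ openSegment ℝ σ₁ σ₂ := by
      refine ⟨t, 1 - t, h0, by linarith, by ring, ?_⟩
      apply DFunLike.ext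
      intro f'
      have happ : (t • σ₁ + (1 - t) • σ₂) f' = t • σ₁ f' + (1 - t) • σ₂ f' := rfl
      rw [happ, hσ1, hσ2]; erw [scaled_apply, scaled_apply]; rw [smul_smul, smul_smul,
        mul_inv_cancel₀ (ne_of_gt h0), mul_inv_cancel₀ (by linarith : (1 : ℝ) - t ≠ 0),
        one_smul, one_smul, ← map_add]
      congr 1
      rw [← sm_add]
      have : g + (1 - g) = (1 : C(X, ℝ)) := by ring
      rw [this, sm_one_f]
    obtain ⟨he1, -⟩ := hext σ₁ hm1 σ₂ hm2 hseg
    have happ1 : σ₁ f = τ f := by rw [he1]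
    rw [hσ1] at happ1; erw [scaled_apply] at happ1
    have : τ (sm g f) = t • τ f := by
      rw [← happ1, smul_smul, mul_inv_cancel₀ (ne_of_gt h0), one_smul]
    rw [this, htval, Complex.real_smul]

lemma tau_real_smul {B : Type*} [CStarAlgebra B] (τ : WeakDual ℂ B) (r : ℝ) (f : B) :
    τ (r • f) = (r : ℂ) * τ f := by
  rw [← algebraMap_smul ℂ r f, map_smul]
  simp [Algebra.algebraMap_eq_smul_one, smul_eq_mul]

lemma mult_real {τ : WeakDual ℂ C(X, A)}
    (hτ : τ ∈ Set.extremePoints ℝ (TracialStates C(X, A)))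
    (g : C(X, ℝ)) (f : C(X, A)) :
    τ (sm g f) = τ (sm g 1) * τ f := by
  have hnn : ∀ h : C(X, ℝ), (∀ y, 0 ≤ h y) → τ (sm h f) = τ (sm h 1) * τ f := by
    intro h hh
    set M : ℝ := ‖h‖ + 1 with hM
    have hMpos : (0 : ℝ) < M := by positivity
    set h' : C(X, ℝ) := M⁻¹ • h with hh'
    have happ : ∀ y, h' y = M⁻¹ * h y := fun y => rfl
    have h'0 : ∀ y, 0 ≤ h' y := fun y => by
      rw [happ]
      have := hh y
      positivity
    have h'1 : ∀ y, h' y ≤ 1 := fun y => by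
      rw [happ, inv_mul_le_iff₀ hMpos, mul_one, hM]
      have h2 : h y ≤ |h y| := le_abs_self _
      have h3 : |h y| ≤ ‖h‖ := by
        rw [← Real.norm_eq_abs]; exact h.norm_coe_le_norm y
      linarith
    have key := mult01 hτ h' h'0 h'1 f
    have e : ∀ f' : C(X, A), sm h f' = M • sm h' f' := by
      intro f'; ext y
      rw [ContinuousMap.smul_apply, sm_apply, sm_apply, happ, smul_smul, ← mul_assoc,
        mul_inv_cancel₀ (ne_of_gt hMpos), one_mul]
    rw [e f, e 1, tau_real_smul, tau_real_smul, key]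
    ring
  have hdecomp : g = (g ⊔ 0) - ((-g) ⊔ 0) := by
    ext y
    simp only [ContinuousMap.sub_apply, ContinuousMap.sup_apply, ContinuousMap.zero_apply,
      ContinuousMap.neg_apply]
    rcases le_total (g y) 0 with h | h
    · rw [sup_eq_right.mpr h, sup_eq_left.mpr (by linarith)]; ring
    · rw [sup_eq_left.mpr h, sup_eq_right.mpr (by linarith)]; ring
  have hgp : ∀ y, 0 ≤ (g ⊔ 0) y := fun y => by
    simp only [ContinuousMap.sup_apply, ContinuousMap.zero_apply]; exact le_sup_right
  have hgn : ∀ y, 0 ≤ ((-g) ⊔ 0) y := fun y => by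
    simp only [ContinuousMap.sup_apply, ContinuousMap.zero_apply]; exact le_sup_right
  calc τ (sm g f) = τ (sm ((g ⊔ 0) - ((-g) ⊔ 0)) f) := by rw [← hdecomp]
  _ = τ (sm (g ⊔ 0) f) - τ (sm ((-g) ⊔ 0) f) := by rw [sm_sub, map_sub]
  _ = τ (sm (g ⊔ 0) 1) * τ f - τ (sm ((-g) ⊔ 0) 1) * τ f := by
      rw [hnn _ hgp, hnn _ hgn]
  _ = (τ (sm (g ⊔ 0) 1) - τ (sm ((-g) ⊔ 0) 1)) * τ f := by ring
  _ = τ (sm g 1) * τ f := by rw [← map_sub, ← sm_sub, ← hdecomp]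

/-- Real part of a complex-valued function. -/
def cre (g : C(X, ℂ)) : C(X, ℝ) :=
  ⟨fun y => (g y).re, Complex.continuous_re.comp (map_continuous g)⟩

/-- Imaginary part of a complex-valued function. -/
def cim (g : C(X, ℂ)) : C(X, ℝ) :=
  ⟨fun y => (g y).im, Complex.continuous_im.comp (map_continuous g)⟩

lemma smC_decomp (g : C(X, ℂ)) (f : C(X, A)) :
    smC g f = sm (cre g) f + Complex.I • sm (cim g) f := by
  ext y
  rw [ContinuousMap.add_apply, ContinuousMap.smul_apply, smC_apply, sm_apply, sm_apply]
  rw [← algebraMap_smul ℂ ((cre g) y) (f y), ← algebraMap_smul ℂ ((cim g) y) (f y),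
    smul_smul, ← add_smul]
  congr 1
  simp only [Complex.coe_algebraMap, cre, cim, ContinuousMap.coe_mk]
  rw [mul_comm, ← Complex.re_add_im (g y)]
  simp

lemma multC {τ : WeakDual ℂ C(X, A)}
    (hτ : τ ∈ Set.extremePoints ℝ (TracialStates C(X, A))) (g h : C(X, ℂ)) :
    τ (smC g (smC h 1)) = τ (smC g 1) * τ (smC h 1) := by
  have e : ∀ f : C(X, A), τ (smC g f) = τ (sm (cre g) f) + Complex.I * τ (sm (cim g) f) := by
    intro f; rw [smC_decomp, map_add, map_smul, smul_eq_mul]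
  rw [e (smC h 1), e 1, mult_real hτ (cre g), mult_real hτ (cim g)]
  ring

lemma smC_mul (g h : C(X, ℂ)) : smC (g * h) (1 : C(X, A)) = smC g (smC h 1) := by
  ext y; simp [mul_smul]

lemma smC_one : smC (1 : C(X, ℂ)) (1 : C(X, A)) = 1 := by
  ext y; simp

lemma smC_real (g : C(X, ℝ)) (f : C(X, A)) :
    smC ⟨fun y => ((g y : ℝ) : ℂ), Complex.continuous_ofReal.comp (map_continuous g)⟩ f
      = sm g f := by
  ext y
  rw [smC_apply, sm_apply, ← algebraMap_smul ℂ (g y) (f y)]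
  rfl

/-- The map `g ↦ g • 1` as a continuous linear map `C(X, ℂ) →L[ℂ] C(X, A)`. -/
def smCL : C(X, ℂ) →L[ℂ] C(X, A) :=
  LinearMap.mkContinuous
    { toFun := fun g => smC g 1
      map_add' := fun g h => by ext y; simp [add_smul]
      map_smul' := fun c g => by ext y; simp [mul_smul] }
    ‖(1 : A)‖ (fun g => by
      rw [mul_comm]
      refine (ContinuousMap.norm_le _ (by positivity)).mpr fun y => ?_
      simp only [LinearMap.coe_mk, AddHom.coe_mk, smC_apply, ContinuousMap.one_apply]
      rw [norm_smul]
      exact mul_le_mul_of_nonneg_right (g.norm_coe_le_norm y) (norm_nonneg _))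

/-- The character of `C(X)` induced by an extreme tracial state. -/
def chi (τ : WeakDual ℂ C(X, A)) : WeakDual ℂ C(X, ℂ) :=
  ContinuousLinearMap.comp τ (smCL (X := X) (A := A))

lemma chi_apply (τ : WeakDual ℂ C(X, A)) (g : C(X, ℂ)) : chi τ g = τ (smC g 1) := rfl

lemma chi_mem {τ : WeakDual ℂ C(X, A)}
    (hτ : τ ∈ Set.extremePoints ℝ (TracialStates C(X, A))) :
    chi τ ∈ WeakDual.characterSpace ℂ C(X, ℂ) := by
  have hone : chi τ 1 = 1 := by
    rw [chi_apply, smC_one]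
    exact hτ.1.1
  constructor
  · intro h0
    apply zero_ne_one (α := ℂ)
    rw [← hone, h0]
    rfl
  · intro g h
    rw [chi_apply, chi_apply, chi_apply, smC_mul]
    exact multC hτ g h

/-- The point of `X` associated to an extreme tracial state. -/
def xpt {τ : WeakDual ℂ C(X, A)}
    (hτ : τ ∈ Set.extremePoints ℝ (TracialStates C(X, A))) : X :=
  (WeakDual.CharacterSpace.homeoEval X ℂ).symm ⟨chi τ, chi_mem hτ⟩

lemma xpt_spec {τ : WeakDual ℂ C(X, A)}
    (hτ : τ ∈ Set.extremePoints ℝ (TracialStates C(X, A))) (g : C(X, ℂ)) :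
    g (xpt hτ) = τ (smC g 1) := by
  have h := (WeakDual.CharacterSpace.homeoEval X ℂ).apply_symm_apply ⟨chi τ, chi_mem hτ⟩
  calc g (xpt hτ)
      = ((WeakDual.CharacterSpace.homeoEval X ℂ)
          ((WeakDual.CharacterSpace.homeoEval X ℂ).symm ⟨chi τ, chi_mem hτ⟩)) g := rfl
    _ = ((⟨chi τ, chi_mem hτ⟩ : WeakDual.characterSpace ℂ C(X, ℂ))) g := by rw [h]
    _ = τ (smC g 1) := rfl

/-- The constant embedding `A →L[ℂ] C(X, A)`. -/
def constL : A →L[ℂ] C(X, A) :=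
  LinearMap.mkContinuous
    { toFun := fun a => ContinuousMap.const X a
      map_add' := fun a b => by ext y; simp
      map_smul' := fun c a => by ext y; simp }
    1 (fun a => by
      rw [one_mul]
      exact (ContinuousMap.norm_le _ (norm_nonneg a)).mpr fun y => le_refl _)

@[simp] lemma constL_apply (a : A) (y : X) : (constL (X := X) a) y = a := rfl

lemma norm_const_le (a : A) : ‖ContinuousMap.const X a‖ ≤ ‖a‖ :=
  (ContinuousMap.norm_le _ (norm_nonneg a)).mpr fun y => le_refl _

/-- Density/partition-of-unity argument: a bounded functional which is `C(X)`-homogeneous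
at the point `x` is determined by the evaluation at `x`. -/
lemma dens {τ : WeakDual ℂ C(X, A)} (hC : ∀ f : C(X, A), ‖τ f‖ ≤ ‖f‖) {x : X}
    (hx : ∀ (g : C(X, ℝ)) (f : C(X, A)), τ (sm g f) = (g x : ℂ) * τ f) (f : C(X, A)) :
    τ f = τ (ContinuousMap.const X (f x)) := by
  have main : ∀ ε : ℝ, 0 < ε → ‖τ f - τ (ContinuousMap.const X (f x))‖ ≤ 2 * ε := by
    intro ε hε
    set U : X → Set X := fun z => {y | ‖f y - f z‖ < ε} with hU
    have hUopen : ∀ z, IsOpen (U z) := fun z =>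
      isOpen_lt (Continuous.norm ((map_continuous f).sub continuous_const)) continuous_const
    have hUcover : (Set.univ : Set X) ⊆ ⋃ z, U z := fun y _ =>
      Set.mem_iUnion.mpr ⟨y, by simp [hU, hε]⟩
    obtain ⟨t, ht⟩ :=
      IsCompact.elim_finite_subcover CompactSpace.isCompact_univ U hUopen hUcover
    have hcov2 : (Set.univ : Set X) ⊆ ⋃ i : {z // z ∈ t}, U i.1 := fun y hy => by
      obtain ⟨z, hz, hyz⟩ := Set.mem_iUnion₂.mp (ht hy)
      exact Set.mem_iUnion.mpr ⟨⟨z, hz⟩, hyz⟩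
    obtain ⟨p, hp⟩ := PartitionOfUnity.exists_isSubordinate isClosed_univ
      (fun i : {z // z ∈ t} => U i.1) (fun i => hUopen i.1) hcov2
    have hsum : ∀ y, ∑ i, p i y = 1 := fun y => by
      have := p.sum_eq_one (Set.mem_univ y)
      rwa [finsum_eq_sum_of_fintype] at this
    have hnn : ∀ (i) (y : X), 0 ≤ p i y := fun i y => p.nonneg i y
    have hsupp : ∀ (i) (y : X), p i y ≠ 0 → ‖f y - f i.1‖ < ε := fun i y hy =>
      hp i (subset_closure hy)
    have hpt : ∀ y, ‖f y - ∑ i, p i y • f i.1‖ ≤ ε := by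
      intro y
      have hrw : f y - ∑ i, p i y • f i.1 = ∑ i, p i y • (f y - f i.1) := by
        simp only [smul_sub, Finset.sum_sub_distrib, ← Finset.sum_smul, hsum y, one_smul]
      rw [hrw]
      refine (norm_sum_le _ _).trans ?_
      have hterm : ∀ i ∈ Finset.univ, ‖p i y • (f y - f i.1)‖ ≤ p i y * ε := by
        intro i _
        rw [norm_smul, Real.norm_eq_abs, abs_of_nonneg (hnn i y)]
        by_cases h0 : p i y = 0
        · simp [h0]
        · exact mul_le_mul_of_nonneg_left (le_of_lt (hsupp i y h0)) (hnn i y)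
      refine (Finset.sum_le_sum hterm).trans ?_
      rw [← Finset.sum_mul, hsum y, one_mul]
    set q : C(X, A) := ∑ i, sm (p i) (ContinuousMap.const X (f i.1)) with hq
    have hqy : ∀ y, q y = ∑ i, p i y • f i.1 := by
      intro y
      rw [hq, ContinuousMap.sum_apply]
      simp
    have hfq : ‖f - q‖ ≤ ε := by
      refine (ContinuousMap.norm_le _ (le_of_lt hε)).mpr fun y => ?_
      rw [ContinuousMap.sub_apply, hqy]
      exact hpt y
    have hτq : τ q = τ (ContinuousMap.const X (∑ i, p i x • f i.1)) := by
      rw [hq, map_sum]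
      have hterm : ∀ i, τ (sm (p i) (ContinuousMap.const X (f i.1)))
          = τ ((p i x : ℝ) • ContinuousMap.const X (f i.1)) := by
        intro i
        rw [hx, tau_real_smul]
      rw [Finset.sum_congr rfl (fun i _ => hterm i), ← map_sum]
      congr 1
      ext y
      rw [ContinuousMap.sum_apply]
      simp
    have hsecond : ‖τ q - τ (ContinuousMap.const X (f x))‖ ≤ ε := by
      rw [hτq, ← map_sub]
      have e : ContinuousMap.const X (∑ i, p i x • f i.1) - ContinuousMap.const X (f x)
          = ContinuousMap.const X ((∑ i, p i x • f i.1) - f x) := by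
        ext y; simp
      rw [e]
      refine (hC _).trans ?_
      refine (norm_const_le _).trans ?_
      rw [← norm_neg, neg_sub]
      exact hpt x
    have hfirst : ‖τ f - τ q‖ ≤ ε := by
      rw [← map_sub]
      exact (hC _).trans hfq
    calc ‖τ f - τ (ContinuousMap.const X (f x))‖
        = ‖(τ f - τ q) + (τ q - τ (ContinuousMap.const X (f x)))‖ := by ring_nf
      _ ≤ ‖τ f - τ q‖ + ‖τ q - τ (ContinuousMap.const X (f x))‖ := norm_add_le _ _
      _ ≤ ε + ε := add_le_add hfirst hsecond
      _ = 2 * ε := by ring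
  by_contra hne
  have hD : 0 < ‖τ f - τ (ContinuousMap.const X (f x))‖ := by
    rw [norm_pos_iff, sub_ne_zero]
    exact hne
  have := main (‖τ f - τ (ContinuousMap.const X (f x))‖ / 4) (by positivity)
  linarith

/-- The evaluation tracial state `f ↦ σ (f x)`. -/
def phi (x : X) (σ : WeakDual ℂ A) : WeakDual ℂ C(X, A) :=
  ContinuousLinearMap.comp σ (ContinuousMap.evalCLM ℂ x)

@[simp] lemma phi_apply (x : X) (σ : WeakDual ℂ A) (f : C(X, A)) :
    phi x σ f = σ (f x) := rfl

lemma phi_mem (x : X) {σ : WeakDual ℂ A} (hσ : σ ∈ TracialStates A) :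
    phi x σ ∈ TracialStates C(X, A) := by
  obtain ⟨h1, hpos, htr⟩ := hσ
  exact ⟨h1, fun f => hpos (f x), fun f g => htr (f x) (g x)⟩

lemma comp_const_mem {τ : WeakDual ℂ C(X, A)} (hτ : τ ∈ TracialStates C(X, A)) :
    ContinuousLinearMap.comp τ (constL (X := X) (A := A)) ∈ TracialStates A := by
  obtain ⟨h1, hpos, htr⟩ := hτ
  refine ⟨?_, ?_, ?_⟩
  · have e : constL (X := X) (A := A) 1 = 1 := by ext y; rfl
    show τ (constL 1) = 1
    rw [e, h1]
  · intro a
    have e : constL (X := X) (A := A) (star a * a)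
        = star (constL (X := X) (A := A) a) * constL (X := X) (A := A) a := by ext y; rfl
    show 0 ≤ τ (constL (star a * a))
    rw [e]
    exact hpos _
  · intro a b
    show τ (constL (a * b)) = τ (constL (b * a))
    have e1 : constL (X := X) (A := A) (a * b)
        = constL (X := X) (A := A) a * constL (X := X) (A := A) b := by ext y; rfl
    have e2 : constL (X := X) (A := A) (b * a)
        = constL (X := X) (A := A) b * constL (X := X) (A := A) a := by ext y; rfl
    rw [e1, e2, htr]

lemma hx_of_extreme {τ : WeakDual ℂ C(X, A)}
    (hτ : τ ∈ Set.extremePoints ℝ (TracialStates C(X, A))) (g : C(X, ℝ)) (f : C(X, A)) :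
    τ (sm g f) = ((g (xpt hτ) : ℝ) : ℂ) * τ f := by
  rw [mult_real hτ g f]
  congr 1
  calc τ (sm g 1)
      = τ (smC ⟨fun y => ((g y : ℝ) : ℂ),
          Complex.continuous_ofReal.comp (map_continuous g)⟩ 1) := by rw [smC_real]
    _ = ((g (xpt hτ) : ℝ) : ℂ) := (xpt_spec hτ _).symm

/-- An extreme tracial state on `C(X, A)` is the evaluation at its associated point. -/
lemma eval_rep {τ : WeakDual ℂ C(X, A)}
    (hτ : τ ∈ Set.extremePoints ℝ (TracialStates C(X, A))) (f : C(X, A)) :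
    τ f = τ (ContinuousMap.const X (f (xpt hτ))) :=
  dens (fun f' => tracial_norm_le hτ.1 f') (fun g f' => hx_of_extreme hτ g f') f

lemma pos_neg_decomp (h : C(X, ℝ)) : h = (h ⊔ 0) - ((-h) ⊔ 0) := by
  ext y
  simp only [ContinuousMap.sub_apply, ContinuousMap.sup_apply, ContinuousMap.zero_apply,
    ContinuousMap.neg_apply]
  rcases le_total (h y) 0 with hy | hy
  · rw [sup_eq_right.mpr hy, sup_eq_left.mpr (by linarith)]; ring
  · rw [sup_eq_left.mpr hy, sup_eq_right.mpr (by linarith)]; ring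

/-- A tracial state on `C(X, A)` that kills nonnegative central functions vanishing at `x`
is the evaluation at `x`. -/
lemma rep_of_van {σj : WeakDual ℂ C(X, A)} (hmem : σj ∈ TracialStates C(X, A)) {x : X}
    (hvan : ∀ g : C(X, ℝ), (∀ y, 0 ≤ g y) → g x = 0 → σj (sm g 1) = 0) (f : C(X, A)) :
    σj f = σj (ContinuousMap.const X (f x)) := by
  refine dens (fun f' => tracial_norm_le hmem f') ?_ f
  intro g f'
  set h : C(X, ℝ) := g - ContinuousMap.const X (g x) with hh
  have hhx : h x = 0 := by simp [hh]
  have hp0 : ∀ y, 0 ≤ (h ⊔ 0) y := fun y => by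
    simp only [ContinuousMap.sup_apply, ContinuousMap.zero_apply]; exact le_sup_right
  have hn0 : ∀ y, 0 ≤ ((-h) ⊔ 0) y := fun y => by
    simp only [ContinuousMap.sup_apply, ContinuousMap.zero_apply]; exact le_sup_right
  have hp0x : (h ⊔ 0) x = 0 := by
    simp [ContinuousMap.sup_apply, hhx]
  have hn0x : ((-h) ⊔ 0) x = 0 := by
    simp [ContinuousMap.sup_apply, hhx]
  have hvp : σj (sm (h ⊔ 0) f') = 0 :=
    sm_zero hmem.2.1 _ hp0 (hvan _ hp0 hp0x) f'
  have hvn : σj (sm ((-h) ⊔ 0) f') = 0 :=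
    sm_zero hmem.2.1 _ hn0 (hvan _ hn0 hn0x) f'
  have hzero : σj (sm h f') = 0 := by
    rw [pos_neg_decomp h, sm_sub, map_sub, hvp, hvn, sub_zero]
  have hsm : sm g f' = sm h f' + (g x : ℝ) • f' := by
    rw [hh]
    ext y
    rw [ContinuousMap.add_apply, ContinuousMap.smul_apply, sm_apply, sm_apply,
      ContinuousMap.sub_apply, ContinuousMap.const_apply, sub_smul]
    abel
  rw [hsm, map_add, hzero, zero_add, tau_real_smul]

lemma nonneg_combo_zero {z1 z2 : ℂ} {a b : ℝ} (ha : 0 < a) (hb : 0 < b)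
    (h1 : 0 ≤ z1) (h2 : 0 ≤ z2) (hsum : a • z1 + b • z2 = 0) : z1 = 0 := by
  rw [Complex.le_def] at h1 h2
  have hre := congrArg Complex.re hsum
  have him := congrArg Complex.im hsum
  simp only [Complex.add_re, Complex.add_im, Complex.real_smul, Complex.mul_re,
    Complex.mul_im, Complex.ofReal_re, Complex.ofReal_im, Complex.zero_re,
    Complex.zero_im] at hre him
  simp only [Complex.zero_re, Complex.zero_im] at h1 h2
  apply Complex.ext
  · simp only [Complex.zero_re]
    nlinarith [h1.1, h2.1, hre]
  · simp only [Complex.zero_im]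
    exact h1.2.symm

lemma phi_extreme (x : X) {σ : WeakDual ℂ A}
    (hσ : σ ∈ Set.extremePoints ℝ (TracialStates A)) :
    phi x σ ∈ Set.extremePoints ℝ (TracialStates C(X, A)) := by
  obtain ⟨hσmem, hσext⟩ := mem_extremePoints.mp hσ
  refine mem_extremePoints.mpr ⟨phi_mem x hσmem, ?_⟩
  rintro σ₁ hm1 σ₂ hm2 ⟨a, b, ha, hb, hab, heq⟩
  have happ : ∀ u : C(X, A), a • σ₁ u + b • σ₂ u = σ (u x) := by
    intro u
    have h := congrArg (fun T : WeakDual ℂ C(X, A) => T u) heq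
    exact h
  -- vanishing for both σ₁ and σ₂
  have hvan1 : ∀ g : C(X, ℝ), (∀ y, 0 ≤ g y) → g x = 0 → σ₁ (sm g 1) = 0 ∧ σ₂ (sm g 1) = 0 := by
    intro g hg hgx
    have h0 : σ ((sm g 1) x) = 0 := by
      have e : (sm g 1) x = (0 : A) := by
        rw [sm_apply, hgx, zero_smul]
      rw [e, map_zero]
    have hsum : a • σ₁ (sm g 1) + b • σ₂ (sm g 1) = 0 := by rw [happ, h0]
    have hz1 : σ₁ (sm g 1) = 0 :=
      nonneg_combo_zero ha hb (sm_pos hm1.2.1 g hg) (sm_pos hm2.2.1 g hg) hsum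
    refine ⟨hz1, ?_⟩
    have hsum2 : b • σ₂ (sm g 1) + a • σ₁ (sm g 1) = 0 := by rw [add_comm]; exact hsum
    exact nonneg_combo_zero hb ha (sm_pos hm2.2.1 g hg) (sm_pos hm1.2.1 g hg) hsum2
  have hrep1 : ∀ f, σ₁ f = σ₁ (ContinuousMap.const X (f x)) :=
    rep_of_van hm1 (fun g hg hgx => (hvan1 g hg hgx).1)
  have hrep2 : ∀ f, σ₂ f = σ₂ (ContinuousMap.const X (f x)) :=
    rep_of_van hm2 (fun g hg hgx => (hvan1 g hg hgx).2)
  set ρ₁ : WeakDual ℂ A := ContinuousLinearMap.comp σ₁ (constL (X := X) (A := A)) with hρ1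
  set ρ₂ : WeakDual ℂ A := ContinuousLinearMap.comp σ₂ (constL (X := X) (A := A)) with hρ2
  have hcomb : a • ρ₁ + b • ρ₂ = σ := by
    apply DFunLike.ext
    intro a'
    have e : (a • ρ₁ + b • ρ₂) a' = a • σ₁ (ContinuousMap.const X a')
        + b • σ₂ (ContinuousMap.const X a') := rfl
    rw [e, happ (ContinuousMap.const X a')]
    rfl
  obtain ⟨hr1, hr2⟩ := hσext ρ₁ (comp_const_mem hm1) ρ₂ (comp_const_mem hm2)
    ⟨a, b, ha, hb, hab, hcomb⟩
  constructor
  · apply DFunLike.ext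
    intro f
    calc σ₁ f = σ₁ (ContinuousMap.const X (f x)) := hrep1 f
      _ = ρ₁ (f x) := rfl
      _ = σ (f x) := by rw [hr1]
      _ = phi x σ f := rfl
  · apply DFunLike.ext
    intro f
    calc σ₂ f = σ₂ (ContinuousMap.const X (f x)) := hrep2 f
      _ = ρ₂ (f x) := rfl
      _ = σ (f x) := by rw [hr2]
      _ = phi x σ f := rfl

lemma comp_const_extreme {τ : WeakDual ℂ C(X, A)}
    (hτ : τ ∈ Set.extremePoints ℝ (TracialStates C(X, A))) :
    ContinuousLinearMap.comp τ (constL (X := X) (A := A))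
      ∈ Set.extremePoints ℝ (TracialStates A) := by
  obtain ⟨hmem, hext⟩ := mem_extremePoints.mp hτ
  refine mem_extremePoints.mpr ⟨comp_const_mem hmem, ?_⟩
  rintro ρ₁ hm1 ρ₂ hm2 ⟨a, b, ha, hb, hab, heq⟩
  have hT : a • phi (xpt hτ) ρ₁ + b • phi (xpt hτ) ρ₂ = τ := by
    apply DFunLike.ext
    intro f
    have e : (a • phi (xpt hτ) ρ₁ + b • phi (xpt hτ) ρ₂) f
        = a • ρ₁ (f (xpt hτ)) + b • ρ₂ (f (xpt hτ)) := rfl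
    rw [e]
    have h := congrArg (fun T : WeakDual ℂ A => T (f (xpt hτ))) heq
    have e2 : (a • ρ₁ + b • ρ₂) (f (xpt hτ))
        = a • ρ₁ (f (xpt hτ)) + b • ρ₂ (f (xpt hτ)) := rfl
    erw [e2] at h
    rw [h]
    calc (ContinuousLinearMap.comp τ (constL (X := X) (A := A))) (f (xpt hτ))
        = τ (ContinuousMap.const X (f (xpt hτ))) := rfl
      _ = τ f := (eval_rep hτ f).symm
  obtain ⟨e1, e2⟩ := hext _ (phi_mem _ hm1) _ (phi_mem _ hm2) ⟨a, b, ha, hb, hab, hT⟩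
  constructor
  · apply DFunLike.ext
    intro a'
    calc ρ₁ a' = phi (xpt hτ) ρ₁ (ContinuousMap.const X a') := rfl
      _ = τ (ContinuousMap.const X a') := by rw [e1]
      _ = (ContinuousLinearMap.comp τ (constL (X := X) (A := A))) a' := rfl
  · apply DFunLike.ext
    intro a'
    calc ρ₂ a' = phi (xpt hτ) ρ₂ (ContinuousMap.const X a') := rfl
      _ = τ (ContinuousMap.const X a') := by rw [e2]
      _ = (ContinuousLinearMap.comp τ (constL (X := X) (A := A))) a' := rfl

end CXA

end Stmt17

theorem stmt17 (X : Type*) [TopologicalSpace X] [CompactSpace X] [T2Space X]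
    (A : Type*) [CStarAlgebra A] :
    ∃ e : (X × (Set.extremePoints ℝ (TracialStates A))) ≃ₜ
        (Set.extremePoints ℝ (TracialStates C(X, A))),
      ∀ (x : X) (τA : Set.extremePoints ℝ (TracialStates A)) (f : C(X, A)),
        (e (x, τA) : WeakDual ℂ C(X, A)) f = (τA : WeakDual ℂ A) (f x) := by
  classical
  set toF : X × (Set.extremePoints ℝ (TracialStates A)) →
      (Set.extremePoints ℝ (TracialStates C(X, A))) :=
    fun p => ⟨Stmt17.phi p.1 p.2.1, Stmt17.phi_extreme p.1 p.2.2⟩ with htoF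
  set invF : (Set.extremePoints ℝ (TracialStates C(X, A))) →
      X × (Set.extremePoints ℝ (TracialStates A)) :=
    fun σ => (Stmt17.xpt σ.2,
      ⟨ContinuousLinearMap.comp σ.1 Stmt17.constL, Stmt17.comp_const_extreme σ.2⟩) with hinvF
  have left : Function.LeftInverse invF toF := by
    rintro ⟨x, τA⟩
    have h1 : Stmt17.xpt (toF (x, τA)).2 = x := by
      rw [show (toF (x, τA)).2 = Stmt17.phi_extreme x τA.2 from rfl]
      unfold Stmt17.xpt
      refine ((WeakDual.CharacterSpace.homeoEval X ℂ).toEquiv.symm_apply_eq).mpr ?_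
      apply Subtype.ext
      apply DFunLike.ext
      intro g
      calc Stmt17.chi (Stmt17.phi x τA.1) g = τA.1 ((g x) • (1 : A)) := rfl
        _ = (g x) * τA.1 (1 : A) := by rw [map_smul, smul_eq_mul]
        _ = g x := by rw [τA.2.1.1, mul_one]
        _ = ((WeakDual.CharacterSpace.homeoEval X ℂ x : WeakDual ℂ C(X, ℂ))) g := rfl
    have h2 : (invF (toF (x, τA))).2 = τA := by
      apply Subtype.ext
      apply DFunLike.ext
      intro a
      rfl
    have h2' : (invF (toF (x, τA))).1 = x := h1
    exact Prod.ext h2' h2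
  have right : Function.RightInverse invF toF := by
    intro σ
    apply Subtype.ext
    apply DFunLike.ext
    intro f
    calc (toF (invF σ)).1 f = σ.1 (ContinuousMap.const X (f (Stmt17.xpt σ.2))) := rfl
      _ = σ.1 f := (Stmt17.eval_rep σ.2 f).symm
  have contF : Continuous toF := by
    apply Continuous.subtype_mk
    apply WeakDual.continuous_of_continuous_eval
    intro f
    rw [continuous_iff_continuousAt]
    intro p₀
    have h1 : Filter.Tendsto
        (fun p : X × (Set.extremePoints ℝ (TracialStates A)) =>
          (p.2.1 : WeakDual ℂ A) (f p.1) - (p.2.1 : WeakDual ℂ A) (f p₀.1))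
        (nhds p₀) (nhds 0) := by
      have hbnd : ∀ p : X × (Set.extremePoints ℝ (TracialStates A)),
          ‖(p.2.1 : WeakDual ℂ A) (f p.1) - (p.2.1 : WeakDual ℂ A) (f p₀.1)‖
            ≤ ‖f p.1 - f p₀.1‖ := by
        intro p
        rw [← map_sub]
        exact Stmt17.tracial_norm_le p.2.2.1 _
      have h0 : Filter.Tendsto
          (fun p : X × (Set.extremePoints ℝ (TracialStates A)) => ‖f p.1 - f p₀.1‖)
          (nhds p₀) (nhds 0) := by
        have hc : Continuous
            fun p : X × (Set.extremePoints ℝ (TracialStates A)) => ‖f p.1 - f p₀.1‖ :=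
          (((map_continuous f).comp continuous_fst).sub continuous_const).norm
        have := hc.tendsto p₀
        simpa using this
      exact squeeze_zero_norm hbnd h0
    have h2 : Filter.Tendsto
        (fun p : X × (Set.extremePoints ℝ (TracialStates A)) =>
          (p.2.1 : WeakDual ℂ A) (f p₀.1))
        (nhds p₀) (nhds ((p₀.2.1 : WeakDual ℂ A) (f p₀.1))) :=
      ((WeakDual.eval_continuous (f p₀.1)).comp
        (continuous_subtype_val.comp continuous_snd)).tendsto p₀
    have hsum := h1.add h2
    simp only [sub_add_cancel, zero_add] at hsum
    exact hsum
  have contInv : Continuous invF := by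
    apply Continuous.prodMk
    · have hchi : Continuous fun σ : (Set.extremePoints ℝ (TracialStates C(X, A))) =>
          (⟨Stmt17.chi σ.1, Stmt17.chi_mem σ.2⟩ :
            WeakDual.characterSpace ℂ C(X, ℂ)) := by
        apply Continuous.subtype_mk
        apply WeakDual.continuous_of_continuous_eval
        intro g
        exact (WeakDual.eval_continuous (Stmt17.smCL g)).comp continuous_subtype_val
      exact ((WeakDual.CharacterSpace.homeoEval X ℂ).symm.continuous).comp hchi
    · apply Continuous.subtype_mk
      apply WeakDual.continuous_of_continuous_eval
      intro a
      exact (WeakDual.eval_continuous (Stmt17.constL a)).comp continuous_subtype_val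
  refine ⟨Homeomorph.mk ⟨toF, invF, left, right⟩ contF contInv, fun x τA f => rfl⟩
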